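/- arXiv:1406.1433 — 5 statements merged into one kernel-verified Lean document; each statement's English description precedes it below -/
import Mathlib

section
/- Let G be a finite simple graph with vertex set V, let k be a natural number, and let A and B be disjoint subsets of V such that every vertex of A is adjacent in G to every vertex of B. Let I and J be independent sets of G of size at least k lying in the same connected component of TAR_k(G), with I ∩ A = ∅ and J ∩ A ≠ ∅. Then the same connected component of TAR_k(G) contains an independent set K of size at least k with K ∩ (A ∪ B) = ∅. -/
/-- A finite set of vertices is independent if no two of its elements are adjacent. -/
def SimpleGraph.IsIndepFinset {V : Type*} (G : SimpleGraph V) (s : Finset V) : Prop :=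
  ∀ ⦃a⦄, a ∈ s → ∀ ⦃b⦄, b ∈ s → a ≠ b → ¬ G.Adj a b

/-- A maximal independent set: an independent set such that no proper superset is independent. -/
def SimpleGraph.IsMaxIndepFinset {V : Type*} (G : SimpleGraph V) (s : Finset V) : Prop :=
  G.IsIndepFinset s ∧ ∀ t : Finset V, G.IsIndepFinset t → s ⊆ t → t = s

/-- The independence number: the largest cardinality of an independent set. -/
noncomputable def SimpleGraph.indepNum' {V : Type*} [Fintype V] (G : SimpleGraph V) : ℕ :=
  sSup {n : ℕ | ∃ s : Finset V, G.IsIndepFinset s ∧ s.card = n}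

/-- The join of two simple graphs: their disjoint union together with all edges
between the two sides. -/
def SimpleGraph.join {α β : Type*} (G : SimpleGraph α) (H : SimpleGraph β) :
    SimpleGraph (α ⊕ β) where
  Adj u v := match u, v with
    | Sum.inl u, Sum.inl v => G.Adj u v
    | Sum.inr u, Sum.inr v => H.Adj u v
    | _, _ => True
  symm := ⟨fun u v => match u, v with
    | Sum.inl u, Sum.inl v => fun h => G.adj_symm h
    | Sum.inr u, Sum.inr v => fun h => H.adj_symm h
    | Sum.inl _, Sum.inr _ | Sum.inr _, Sum.inl _ => fun _ => trivial⟩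
  loopless := ⟨fun u => by cases u <;> simp⟩

/-- The token-addition-removal reconfiguration graph `TAR_k(G)`: its vertices are the
independent sets of `G` of size at least `k`, two of them being adjacent iff they
differ on exactly one vertex. -/
def SimpleGraph.TAR {V : Type*} [DecidableEq V] (G : SimpleGraph V) (k : ℕ) :
    SimpleGraph {I : Finset V // G.IsIndepFinset I ∧ k ≤ I.card} where
  Adj I J := (symmDiff I.1 J.1).card = 1
  symm := ⟨fun I J h => by simpa only [symmDiff_comm] using h⟩
  loopless := ⟨fun I h => by
    simp only [symmDiff_self, Finset.bot_eq_empty, Finset.card_empty] at h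
    exact absurd h (by norm_num)⟩

lemma tar_aux {V : Type*} [Fintype V] [DecidableEq V]
    (G : SimpleGraph V) (k : ℕ) (A B : Finset V) (hdisj : Disjoint A B)
    (hjoin : ∀ a ∈ A, ∀ b ∈ B, G.Adj a b) :
    ∀ (X Y : {I : Finset V // G.IsIndepFinset I ∧ k ≤ I.card}),
      (G.TAR k).Walk X Y → X.1 ∩ A = ∅ → Y.1 ∩ A ≠ ∅ →
      ∃ (K : Finset V) (hK : G.IsIndepFinset K ∧ k ≤ K.card),
        K ∩ (A ∪ B) = ∅ ∧ (G.TAR k).Reachable X ⟨K, hK⟩ := by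
  intro X Y w
  induction w with
  | nil => intro h1 h2; exact absurd h1 h2
  | @cons X X' Y hadj p ih =>
    intro hXA hYA
    by_cases hX' : X'.1 ∩ A = ∅
    · obtain ⟨K, hK, hKAB, hr⟩ := ih hX' hYA
      exact ⟨K, hK, hKAB, hadj.reachable.trans hr⟩
    · -- the added vertex is in A
      obtain ⟨a, ha⟩ := Finset.nonempty_iff_ne_empty.2 hX'
      rw [Finset.mem_inter] at ha
      have haX : a ∉ X.1 := fun h => (Finset.eq_empty_iff_forall_notMem.1 hXA a)
        (Finset.mem_inter.2 ⟨h, ha.2⟩)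
      have hasd : a ∈ symmDiff X.1 X'.1 := by
        rw [Finset.mem_symmDiff]; exact Or.inr ⟨ha.1, haX⟩
      have hsd : symmDiff X.1 X'.1 = {a} := by
        obtain ⟨b, hb⟩ := Finset.card_eq_one.1 (show (symmDiff X.1 X'.1).card = 1 from hadj)
        rw [hb] at hasd ⊢
        rw [Finset.mem_singleton] at hasd
        rw [hasd]
      have hXB : X.1 ∩ B = ∅ := by
        rw [Finset.eq_empty_iff_forall_notMem]
        intro b hb
        rw [Finset.mem_inter] at hb
        have hba : b ≠ a := fun h => (Finset.disjoint_left.1 hdisj ha.2) (h ▸ hb.2)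
        have hbX' : b ∈ X'.1 := by
          by_contra hb'
          have : b ∈ symmDiff X.1 X'.1 := Finset.mem_symmDiff.2 (Or.inl ⟨hb.1, hb'⟩)
          rw [hsd, Finset.mem_singleton] at this
          exact hba this
        exact X'.2.1 ha.1 hbX' hba.symm (hjoin a ha.2 b hb.2)
      refine ⟨X.1, X.2, ?_, by rfl⟩
      rw [Finset.inter_union_distrib_left, hXA, hXB, Finset.empty_union]

theorem tar_reach_indep_avoiding_join_pair {V : Type*} [Fintype V] [DecidableEq V]
    (G : SimpleGraph V) (k : ℕ) (A B : Finset V) (hdisj : Disjoint A B)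
    (hjoin : ∀ a ∈ A, ∀ b ∈ B, G.Adj a b)
    (I J : Finset V)
    (hI : G.IsIndepFinset I ∧ k ≤ I.card) (hJ : G.IsIndepFinset J ∧ k ≤ J.card)
    (hreach : (G.TAR k).Reachable ⟨I, hI⟩ ⟨J, hJ⟩)
    (hIA : I ∩ A = ∅) (hJA : J ∩ A ≠ ∅) :
    ∃ (K : Finset V) (hK : G.IsIndepFinset K ∧ k ≤ K.card),
      K ∩ (A ∪ B) = ∅ ∧ (G.TAR k).Reachable ⟨I, hI⟩ ⟨K, hK⟩ := by
  obtain ⟨w⟩ := hreach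
  exact tar_aux G k A B hdisj hjoin _ _ w hIA hJA
end

section
/- Let G be a finite simple graph with vertex set V, let k be a natural number, and let A and B be disjoint subsets of V such that every vertex of A is adjacent in G to every vertex of B. Suppose every independent set of G that is disjoint from A ∪ B has size strictly less than k. If I and J are independent sets of G of size at least k with I ∩ A = ∅ and J ∩ A ≠ ∅, then I and J lie in different connected components of TAR_k(G). -/
lemma tar_step_aux {V : Type*} [Fintype V] [DecidableEq V]
    (G : SimpleGraph V) (k : ℕ) (A B : Finset V) (hdisj : Disjoint A B)
    (hjoin : ∀ a ∈ A, ∀ b ∈ B, G.Adj a b)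
    (hsmall : ∀ S : Finset V, G.IsIndepFinset S → S ∩ (A ∪ B) = ∅ → S.card < k)
    (X Y : {I : Finset V // G.IsIndepFinset I ∧ k ≤ I.card})
    (hadj : (G.TAR k).Adj X Y) (hX : X.1 ∩ A = ∅) : Y.1 ∩ A = ∅ := by
  by_contra hY
  obtain ⟨a, ha⟩ := Finset.nonempty_iff_ne_empty.mpr hY
  rw [Finset.mem_inter] at ha
  have haX : a ∉ X.1 := fun h => by
    have : a ∈ X.1 ∩ A := Finset.mem_inter.mpr ⟨h, ha.2⟩
    simp [hX] at this
  have hsd : a ∈ symmDiff X.1 Y.1 := by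
    rw [Finset.mem_symmDiff]; exact Or.inr ⟨ha.1, haX⟩
  obtain ⟨x, hx⟩ := Finset.card_eq_one.mp hadj
  have hax : a = x := by rw [hx] at hsd; simpa using hsd
  have hXY : X.1 ⊆ Y.1 := by
    intro b hb
    by_contra hbY
    have : b ∈ symmDiff X.1 Y.1 := Finset.mem_symmDiff.mpr (Or.inl ⟨hb, hbY⟩)
    rw [hx, Finset.mem_singleton] at this
    rw [this, ← hax] at hb
    exact haX hb
  have hXAB : (X.1 ∩ (A ∪ B)).Nonempty := by
    rw [Finset.nonempty_iff_ne_empty]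
    intro h
    exact absurd (hsmall X.1 X.2.1 h) (not_lt.mpr X.2.2)
  obtain ⟨c, hc⟩ := hXAB
  rw [Finset.mem_inter, Finset.mem_union] at hc
  have hcB : c ∈ B := by
    rcases hc.2 with h | h
    · exact absurd (Finset.mem_inter.mpr ⟨hc.1, h⟩) (by simp [hX])
    · exact h
  have hne : a ≠ c := fun h => hdisj.forall_ne_finset ha.2 hcB h
  exact Y.2.1 ha.1 (hXY hc.1) hne (hjoin a ha.2 c hcB)

theorem tar_not_reachable_of_join_pair {V : Type*} [Fintype V] [DecidableEq V]
    (G : SimpleGraph V) (k : ℕ) (A B : Finset V) (hdisj : Disjoint A B)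
    (hjoin : ∀ a ∈ A, ∀ b ∈ B, G.Adj a b)
    (hsmall : ∀ S : Finset V, G.IsIndepFinset S → S ∩ (A ∪ B) = ∅ → S.card < k)
    (I J : Finset V)
    (hI : G.IsIndepFinset I ∧ k ≤ I.card) (hJ : G.IsIndepFinset J ∧ k ≤ J.card)
    (hIA : I ∩ A = ∅) (hJA : J ∩ A ≠ ∅) :
    ¬ (G.TAR k).Reachable ⟨I, hI⟩ ⟨J, hJ⟩ := by
  intro h
  obtain ⟨w⟩ := h
  suffices h : ∀ (X Y : {I : Finset V // G.IsIndepFinset I ∧ k ≤ I.card}),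
      (G.TAR k).Walk X Y → X.1 ∩ A = ∅ → Y.1 ∩ A = ∅ by
    exact hJA (h _ _ w hIA)
  intro X Y w
  induction w with
  | nil => exact id
  | cons hadj _ ih =>
    exact fun hX => ih (tar_step_aux G k A B hdisj hjoin hsmall _ _ hadj hX)
end

section
/- Let G be the join of two finite simple graphs G₁ and G₂ (with vertex sets V₁ and V₂), and let k ≥ 1. If I is an independent set of G of size at least k contained in V₁ and J is an independent set of G of size at least k contained in V₂, then I and J lie in different connected components of TAR_k(G). -/
lemma tar_step {V₁ V₂ : Type*} [DecidableEq V₁] [DecidableEq V₂]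
    (G₁ : SimpleGraph V₁) (G₂ : SimpleGraph V₂) (k : ℕ) (hk : 1 ≤ k)
    (S S' : Finset (V₁ ⊕ V₂))
    (hS' : (G₁.join G₂).IsIndepFinset S') (hcard : k ≤ S.card)
    (hadj : (symmDiff S S').card = 1)
    (hP : ∀ x ∈ S, ∃ a : V₁, x = Sum.inl a) :
    ∀ x ∈ S', ∃ a : V₁, x = Sum.inl a := by
  obtain ⟨x, hx⟩ := Finset.card_eq_one.mp hadj
  intro y hy
  by_cases hyS : y ∈ S
  · exact hP y hyS
  · have hysd : y ∈ symmDiff S S' := Finset.mem_symmDiff.mpr (Or.inr ⟨hy, hyS⟩)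
    rw [hx, Finset.mem_singleton] at hysd
    subst hysd
    rcases hy' : y with a | b
    · exact ⟨a, rfl⟩
    · exfalso
      have hSne : S.Nonempty := Finset.card_pos.mp (lt_of_lt_of_le hk hcard)
      obtain ⟨z, hz⟩ := hSne
      obtain ⟨a, ha⟩ := hP z hz
      have hzne : z ≠ y := by rw [ha, hy']; simp
      have hznsd : z ∉ symmDiff S S' := by
        rw [hx, Finset.mem_singleton]; exact hzne
      have hzS' : z ∈ S' := by
        by_contra h
        exact hznsd (Finset.mem_symmDiff.mpr (Or.inl ⟨hz, h⟩))
      exact hS' hzS' hy hzne (by rw [ha, hy']; exact trivial)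

lemma tar_walk_inl {V₁ V₂ : Type*} [DecidableEq V₁] [DecidableEq V₂]
    (G₁ : SimpleGraph V₁) (G₂ : SimpleGraph V₂) (k : ℕ) (hk : 1 ≤ k)
    {u v : {I : Finset (V₁ ⊕ V₂) // (G₁.join G₂).IsIndepFinset I ∧ k ≤ I.card}}
    (w : ((G₁.join G₂).TAR k).Walk u v)
    (hP : ∀ x ∈ u.1, ∃ a : V₁, x = Sum.inl a) :
    ∀ x ∈ v.1, ∃ a : V₁, x = Sum.inl a := by
  induction w with
  | nil => exact hP
  | @cons u' v' _ h p ih =>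
    exact ih (tar_step G₁ G₂ k hk u'.1 v'.1 v'.2.1 u'.2.2 h hP)

theorem tar_join_sides_not_reachable {V₁ V₂ : Type*} [Fintype V₁] [Fintype V₂]
    [DecidableEq V₁] [DecidableEq V₂]
    (G₁ : SimpleGraph V₁) (G₂ : SimpleGraph V₂) (k : ℕ) (hk : 1 ≤ k)
    (I J : Finset (V₁ ⊕ V₂))
    (hI : (G₁.join G₂).IsIndepFinset I ∧ k ≤ I.card)
    (hJ : (G₁.join G₂).IsIndepFinset J ∧ k ≤ J.card)
    (hIleft : ∀ x ∈ I, ∃ a : V₁, x = Sum.inl a)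
    (hJright : ∀ x ∈ J, ∃ b : V₂, x = Sum.inr b) :
    ¬ ((G₁.join G₂).TAR k).Reachable ⟨I, hI⟩ ⟨J, hJ⟩ := by
  intro hr
  obtain ⟨w⟩ := hr
  have hJl := tar_walk_inl G₁ G₂ k hk w hIleft
  have hJne : J.Nonempty := Finset.card_pos.mp (lt_of_lt_of_le hk hJ.2)
  obtain ⟨x, hx⟩ := hJne
  obtain ⟨a, ha⟩ := hJl x hx
  obtain ⟨b, hb⟩ := hJright x hx
  rw [ha] at hb; exact Sum.inl_ne_inr hb
end

section
/- Let G be a finite simple graph with vertex set V, let k be a natural number, and let A and B be disjoint nonempty subsets of V such that: every vertex of A is adjacent in G to every vertex of B; the set A ∪ B is a module of G (every vertex of V \ (A ∪ B) is adjacent either to all vertices of A ∪ B or to none of them); and the independence number of the subgraph of G induced by A is at least the independence number of the subgraph induced by B. If I and J are independent sets of G of size at least k with I ∩ B = ∅ and J ∩ B = ∅, and I and J lie in the same connected component of TAR_k(G), then there is a path from I to J in TAR_k(G) all of whose vertices are independent sets disjoint from B; equivalently, I and J lie in the same connected component of TAR_k(G − B), where G − B is the subgraph of G induced by V \ B. 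-/
section Aux

open Finset

variable {V : Type*} [Fintype V] [DecidableEq V] (G : SimpleGraph V)

/-- Any independent subset of `T` has size at most the independence number of `G[T]`. -/
lemma indep_card_le_indepNum (s T : Finset V) (hs : G.IsIndepFinset s) (hsub : s ⊆ T) :
    s.card ≤ (G.induce (T : Set V)).indepNum' := by
  classical
  set s' : Finset ↥(T : Set V) :=
    s.attach.map ⟨fun x => ⟨x.1, by simpa using hsub x.2⟩,
      by
        intro x y hxy
        have h1 : (x : V) = (y : V) := by
          simpa using congrArg Subtype.val hxy
        exact Subtype.ext h1⟩ with hs'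
  have hcard : s'.card = s.card := by simp [hs']
  have hindep : (G.induce (T : Set V)).IsIndepFinset s' := by
    intro a ha b hb hab hadj
    obtain ⟨x, _, rfl⟩ := Finset.mem_map.mp ha
    obtain ⟨y, _, rfl⟩ := Finset.mem_map.mp hb
    have hne : (x : V) ≠ (y : V) := fun h => hab (by simp [Subtype.ext h])
    exact hs x.2 y.2 hne hadj
  have hmem : s.card ∈ {n : ℕ | ∃ t : Finset ↥(T : Set V),
      (G.induce (T : Set V)).IsIndepFinset t ∧ t.card = n} := ⟨s', hindep, hcard⟩
  exact le_csSup ⟨Fintype.card ↥(T : Set V),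
    fun n ⟨t, _, ht⟩ => ht ▸ Finset.card_le_univ t⟩ hmem

/-- There is an independent subset of `T` realizing the independence number of `G[T]`. -/
lemma exists_max_indep (T : Finset V) :
    ∃ s : Finset V, s ⊆ T ∧ G.IsIndepFinset s ∧ s.card = (G.induce (T : Set V)).indepNum' := by
  classical
  set P := {n : ℕ | ∃ t : Finset ↥(T : Set V),
      (G.induce (T : Set V)).IsIndepFinset t ∧ t.card = n} with hP
  have hne : P.Nonempty := ⟨0, ∅, fun a ha => absurd ha (by simp), rfl⟩
  have hbdd : BddAbove P := ⟨Fintype.card ↥(T : Set V),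
    fun n ⟨t, _, ht⟩ => ht ▸ Finset.card_le_univ t⟩
  have hmem : (G.induce (T : Set V)).indepNum' ∈ P := Nat.sSup_mem hne hbdd
  obtain ⟨t, hti, htc⟩ := hmem
  refine ⟨t.image Subtype.val, ?_, ?_, ?_⟩
  · intro a ha
    obtain ⟨x, _, rfl⟩ := Finset.mem_image.mp ha
    simpa using x.2
  · intro a ha b hb hab hadj
    obtain ⟨x, hx, rfl⟩ := Finset.mem_image.mp ha
    obtain ⟨y, hy, rfl⟩ := Finset.mem_image.mp hb
    exact hti hx hy (fun h => hab (congrArg Subtype.val h)) hadj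
  · rw [Finset.card_image_of_injective _ Subtype.val_injective, htc]

lemma getElem_not_mem_take {α : Type*} (l : List α) (h : l.Nodup) (n : ℕ) (hn : n < l.length) :
    l[n] ∉ l.take n := by
  have h2 := List.take_append_drop n l
  have hnd : (l.take n ++ l.drop n).Nodup := h2.symm ▸ h
  rw [List.nodup_append] at hnd
  intro hmem
  exact hnd.2.2 _ hmem _ (by rw [List.drop_eq_getElem_cons hn]; exact List.mem_cons_self) rfl

lemma symmDiff_insert_self' {α : Type*} [DecidableEq α] {s : Finset α} {w : α} (h : w ∉ s) :
    symmDiff s (insert w s) = {w} := by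
  ext a; simp [Finset.mem_symmDiff]; aesop

lemma symmDiff_card_one {α : Type*} [DecidableEq α] {X Y : Finset α}
    (h : (symmDiff X Y).card = 1) :
    (∃ v, v ∉ X ∧ Y = insert v X) ∨ (∃ v, v ∉ Y ∧ X = insert v Y) := by
  obtain ⟨v, hv⟩ := Finset.card_eq_one.mp h
  have hmem : ∀ a, a ∈ symmDiff X Y ↔ a = v := by rw [hv]; simp
  have hv' := (hmem v).mpr rfl
  rw [Finset.mem_symmDiff] at hv'
  rcases hv' with ⟨hvX, hvY⟩ | ⟨hvY, hvX⟩
  · right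
    refine ⟨v, hvY, ?_⟩
    ext a
    simp only [Finset.mem_insert]
    constructor
    · intro ha
      by_cases h2 : a ∈ Y
      · exact Or.inr h2
      · exact Or.inl ((hmem a).mp (Finset.mem_symmDiff.mpr (Or.inl ⟨ha, h2⟩)))
    · rintro (rfl | ha)
      · exact hvX
      · by_contra h2
        have h3 := (hmem a).mp (Finset.mem_symmDiff.mpr (Or.inr ⟨ha, h2⟩))
        exact hvY (h3 ▸ ha)
  · left
    refine ⟨v, hvX, ?_⟩
    ext a
    simp only [Finset.mem_insert]
    constructor
    · intro ha
      by_cases h2 : a ∈ X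
      · exact Or.inr h2
      · exact Or.inl ((hmem a).mp (Finset.mem_symmDiff.mpr (Or.inr ⟨ha, h2⟩)))
    · rintro (rfl | ha)
      · exact hvY
      · by_contra h2
        have h3 := (hmem a).mp (Finset.mem_symmDiff.mpr (Or.inl ⟨ha, h2⟩))
        exact hvX (h3 ▸ ha)

end Aux
theorem tar_path_avoiding_bad_side {V : Type*} [Fintype V] [DecidableEq V]
    (G : SimpleGraph V) (k : ℕ) (A B : Finset V)
    (hAne : A.Nonempty) (hBne : B.Nonempty) (hdisj : Disjoint A B)
    (hjoin : ∀ a ∈ A, ∀ b ∈ B, G.Adj a b)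
    (hmodule : ∀ v : V, v ∉ A ∪ B →
      (∀ w ∈ A ∪ B, G.Adj v w) ∨ (∀ w ∈ A ∪ B, ¬ G.Adj v w))
    (halpha : (G.induce (B : Set V)).indepNum' ≤ (G.induce (A : Set V)).indepNum')
    (I J : Finset V)
    (hI : G.IsIndepFinset I ∧ k ≤ I.card) (hJ : G.IsIndepFinset J ∧ k ≤ J.card)
    (hIB : I ∩ B = ∅) (hJB : J ∩ B = ∅)
    (hreach : (G.TAR k).Reachable ⟨I, hI⟩ ⟨J, hJ⟩) :
    ∃ p : (G.TAR k).Walk ⟨I, hI⟩ ⟨J, hJ⟩,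
      ∀ x ∈ p.support, (x : Finset V) ∩ B = ∅ := by
  classical
  obtain ⟨S, hSA, hSindep, hScard⟩ := exists_max_indep G A
  set l := S.toList with hl
  have hlnd : l.Nodup := S.nodup_toList
  have hllen : l.length = S.card := S.length_toList
  have hlS : ∀ a, a ∈ l → a ∈ S := fun a ha => Finset.mem_toList.mp ha
  -- X independent meeting B cannot meet A
  have hXA : ∀ X : Finset V, G.IsIndepFinset X → (X ∩ B).Nonempty → ∀ a ∈ X, a ∉ A := by
    intro X hX ⟨b, hb⟩ a ha haA
    rw [Finset.mem_inter] at hb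
    have hne : a ≠ b := fun h => (Finset.disjoint_left.mp hdisj haA) (h ▸ hb.2)
    exact hX ha hb.1 hne (hjoin a haA b hb.2)
  -- bound on the B-part
  have hbound : ∀ X : Finset V, G.IsIndepFinset X → (X ∩ B).card ≤ S.card := by
    intro X hX
    have h1 : G.IsIndepFinset (X ∩ B) := fun a ha b hb hab =>
      hX (Finset.mem_inter.mp ha).1 (Finset.mem_inter.mp hb).1 hab
    have h2 := indep_card_le_indepNum G (X ∩ B) B h1 Finset.inter_subset_right
    rw [hScard]
    exact h2.trans halpha
  -- the transfer map
  set F : Finset V → Finset V := fun X => (X \ B) ∪ (l.take (X ∩ B).card).toFinset with hF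
  have htakeS : ∀ m, (l.take m).toFinset ⊆ S := by
    intro m a ha
    exact hlS a (List.mem_of_mem_take (List.mem_toFinset.mp ha))
  have htakecard : ∀ m, m ≤ S.card → (l.take m).toFinset.card = m := by
    intro m hm
    rw [List.toFinset_card_of_nodup ((List.take_sublist m l).nodup hlnd)]
    rw [List.length_take, hllen]
    exact Nat.min_eq_left hm
  have hFB : ∀ X, F X ∩ B = ∅ := by
    intro X
    ext a
    simp only [hF, Finset.mem_inter, Finset.mem_union, Finset.mem_sdiff,
      Finset.notMem_empty, iff_false, not_and]
    rintro (⟨_, h⟩ | h)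
    · exact h
    · exact fun hb => (Finset.disjoint_left.mp hdisj (hSA (htakeS _ h))) hb
  have hF0 : ∀ X, X ∩ B = ∅ → F X = X := by
    intro X h
    have h1 : X \ B = X := Finset.sdiff_eq_self_of_disjoint
      (Finset.disjoint_iff_inter_eq_empty.mpr h)
    simp [hF, h, h1]
  have hdisjF : ∀ X : Finset V, G.IsIndepFinset X →
      Disjoint (X \ B) (l.take (X ∩ B).card).toFinset := by
    intro X hX
    rcases Finset.eq_empty_or_nonempty (X ∩ B) with he | hne
    · simp [he]
    · rw [Finset.disjoint_left]
      intro a ha haT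
      exact hXA X hX hne a (Finset.mem_sdiff.mp ha).1 (hSA (htakeS _ haT))
  have hFcard : ∀ X : Finset V, G.IsIndepFinset X → (F X).card = X.card := by
    intro X hX
    rw [hF]
    rw [Finset.card_union_of_disjoint (hdisjF X hX),
      htakecard _ (hbound X hX), Finset.card_sdiff_add_card_inter]
  have hFindep : ∀ X : Finset V, G.IsIndepFinset X → G.IsIndepFinset (F X) := by
    intro X hX a ha b hb hab hadj
    rw [hF] at ha hb
    simp only [Finset.mem_union, List.mem_toFinset] at ha hb
    have hmixed : ∀ x y : V, x ∈ X \ B → y ∈ S → ¬ (X ∩ B).card = 0 → ¬ G.Adj x y := by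
      intro x y hx hy hm hxy
      have hne : (X ∩ B).Nonempty := Finset.nonempty_of_ne_empty
        (fun h => hm (by rw [h]; simp))
      obtain ⟨b0, hb0⟩ := hne
      rw [Finset.mem_inter] at hb0
      rw [Finset.mem_sdiff] at hx
      have hxnA : x ∉ A := hXA X hX ⟨b0, Finset.mem_inter.mpr hb0⟩ x hx.1
      have hxnAB : x ∉ A ∪ B := by simp [hxnA, hx.2]
      rcases hmodule x hxnAB with hall | hnone
      · have hxb0 : G.Adj x b0 := hall b0 (Finset.mem_union_right _ hb0.2)
        have hneq : x ≠ b0 := fun h => hx.2 (h ▸ hb0.2)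
        exact hX hx.1 hb0.1 hneq hxb0 
      · exact hnone y (Finset.mem_union_left _ (hSA hy)) hxy
    rcases ha with ha | ha <;> rcases hb with hb | hb
    · exact hX (Finset.mem_sdiff.mp ha).1 (Finset.mem_sdiff.mp hb).1 hab hadj
    · have hm : ¬ (X ∩ B).card = 0 := by
        intro h0
        rw [h0] at hb; simp at hb
      exact hmixed a b ha (hlS b (List.mem_of_mem_take hb)) hm hadj
    · have hm : ¬ (X ∩ B).card = 0 := by
        intro h0
        rw [h0] at ha; simp at ha
      exact hmixed b a hb (hlS a (List.mem_of_mem_take ha)) hm (G.adj_symm hadj)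
    · exact hSindep (hlS a (List.mem_of_mem_take ha))
        (hlS b (List.mem_of_mem_take hb)) hab hadj
  -- key edge lemma
  have hkey : ∀ (X : Finset V) (v : V), v ∉ X → G.IsIndepFinset (insert v X) →
      ∃ w, w ∉ F X ∧ F (insert v X) = insert w (F X) := by
    intro X v hv hY
    have hXind : G.IsIndepFinset X := fun a ha b hb hab =>
      hY (Finset.mem_insert_of_mem ha) (Finset.mem_insert_of_mem hb) hab
    set m := (X ∩ B).card with hm
    by_cases hvB : v ∈ B
    · -- added vertex is in B : the image gains the next element of S
      have hYB : insert v X ∩ B = insert v (X ∩ B) := by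
        ext a
        simp only [Finset.mem_inter, Finset.mem_insert]
        constructor
        · rintro ⟨(rfl | ha), hb⟩
          · exact Or.inl rfl
          · exact Or.inr ⟨ha, hb⟩
        · rintro (rfl | ⟨ha, hb⟩)
          · exact ⟨Or.inl rfl, hvB⟩
          · exact ⟨Or.inr ha, hb⟩
      have hvXB : v ∉ X ∩ B := fun h => hv (Finset.mem_inter.mp h).1
      have hYBcard : (insert v X ∩ B).card = m + 1 := by
        rw [hYB, Finset.card_insert_of_notMem hvXB]
      have hYsd : insert v X \ B = X \ B := by
        ext a
        simp only [Finset.mem_sdiff, Finset.mem_insert]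
        constructor
        · rintro ⟨(rfl | ha), hb⟩
          · exact absurd hvB hb
          · exact ⟨ha, hb⟩
        · rintro ⟨ha, hb⟩
          exact ⟨Or.inr ha, hb⟩
      have hmlt : m < l.length := by
        rw [hllen]
        have := hbound (insert v X) hY
        omega
      refine ⟨l[m], ?_, ?_⟩
      · intro hmem
        rw [hF] at hmem
        simp only [Finset.mem_union, List.mem_toFinset] at hmem
        rcases hmem with hmem | hmem
        · have hne : (insert v X ∩ B).Nonempty := by
            rw [hYB]; exact Finset.insert_nonempty _ _
          have := hXA (insert v X) hY hne l[m]
            (Finset.mem_insert_of_mem (Finset.mem_sdiff.mp hmem).1)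
          exact this (hSA (hlS _ (List.getElem_mem hmlt)))
        · exact getElem_not_mem_take l hlnd m hmlt hmem
      · have htake : (l.take (m + 1)).toFinset = insert l[m] (l.take m).toFinset := by
          have h1 : l.take (m + 1) = l.take m ++ [l[m]] := by
            rw [← List.take_concat_get hmlt, List.concat_eq_append]
          ext a
          simp only [List.mem_toFinset, Finset.mem_insert, h1, List.mem_append,
            List.mem_singleton]
          tauto
        rw [hF]
        simp only [hYsd, hYBcard, htake]
        rw [Finset.union_insert]
    · -- added vertex is outside B
      have hYB : insert v X ∩ B = X ∩ B := by
        ext a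
        simp only [Finset.mem_inter, Finset.mem_insert]
        constructor
        · rintro ⟨(rfl | ha), hb⟩
          · exact absurd hb hvB
          · exact ⟨ha, hb⟩
        · rintro ⟨ha, hb⟩
          exact ⟨Or.inr ha, hb⟩
      have hYsd : insert v X \ B = insert v (X \ B) := by
        ext a
        simp only [Finset.mem_sdiff, Finset.mem_insert]
        constructor
        · rintro ⟨(rfl | ha), hb⟩
          · exact Or.inl rfl
          · exact Or.inr ⟨ha, hb⟩
        · rintro (rfl | ⟨ha, hb⟩)
          · exact ⟨Or.inl rfl, hvB⟩
          · exact ⟨Or.inr ha, hb⟩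
      refine ⟨v, ?_, ?_⟩
      · intro hmem
        rw [hF] at hmem
        simp only [Finset.mem_union, List.mem_toFinset] at hmem
        rcases hmem with hmem | hmem
        · exact hv (Finset.mem_sdiff.mp hmem).1
        · rcases Finset.eq_empty_or_nonempty (X ∩ B) with he | hne
          · rw [he] at hmem; simp at hmem
          · have hne' : (insert v X ∩ B).Nonempty := by rw [hYB]; exact hne
            exact hXA (insert v X) hY hne' v (Finset.mem_insert_self _ _)
              (hSA (hlS _ (List.mem_of_mem_take hmem)))
      · rw [hF]
        simp only [hYsd, hYB]
        rw [Finset.insert_union]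
  -- lift F to vertices of TAR
  set Fv : {X : Finset V // G.IsIndepFinset X ∧ k ≤ X.card} →
      {X : Finset V // G.IsIndepFinset X ∧ k ≤ X.card} :=
    fun X => ⟨F X.1, hFindep X.1 X.2.1, by rw [hFcard X.1 X.2.1]; exact X.2.2⟩ with hFv
  have hedge : ∀ X Y : {X : Finset V // G.IsIndepFinset X ∧ k ≤ X.card},
      (G.TAR k).Adj X Y → (G.TAR k).Adj (Fv X) (Fv Y) := by
    intro X Y hXY
    have h1 : (symmDiff X.1 Y.1).card = 1 := hXY
    show (symmDiff (F X.1) (F Y.1)).card = 1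
    rcases symmDiff_card_one h1 with ⟨v, hvX, hYeq⟩ | ⟨v, hvY, hXeq⟩
    · obtain ⟨w, hw1, hw2⟩ := hkey X.1 v hvX (hYeq ▸ Y.2.1)
      rw [hYeq, hw2, symmDiff_insert_self' hw1]
      simp
    · obtain ⟨w, hw1, hw2⟩ := hkey Y.1 v hvY (hXeq ▸ X.2.1)
      rw [symmDiff_comm, hXeq, hw2, symmDiff_insert_self' hw1]
      simp
  -- map a walk through Fv
  have hwalkmap : ∀ (X Y : {X : Finset V // G.IsIndepFinset X ∧ k ≤ X.card})
      (p : (G.TAR k).Walk X Y), ∃ q : (G.TAR k).Walk (Fv X) (Fv Y),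
        ∀ z ∈ q.support, (z : Finset V) ∩ B = ∅ := by
    intro X Y p
    induction p with
    | nil =>
      refine ⟨SimpleGraph.Walk.nil, ?_⟩
      intro z hz
      rw [SimpleGraph.Walk.support_nil, List.mem_singleton] at hz
      subst hz
      exact hFB _
    | cons h p ih =>
      obtain ⟨q, hq⟩ := ih
      refine ⟨SimpleGraph.Walk.cons (hedge _ _ h) q, ?_⟩
      intro z hz
      rw [SimpleGraph.Walk.support_cons, List.mem_cons] at hz
      rcases hz with rfl | hz
      · exact hFB _
      · exact hq z hz
  obtain ⟨p⟩ := hreach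
  obtain ⟨q, hq⟩ := hwalkmap _ _ p
  have hIeq : Fv ⟨I, hI⟩ = ⟨I, hI⟩ := Subtype.ext (hF0 I hIB)
  have hJeq : Fv ⟨J, hJ⟩ = ⟨J, hJ⟩ := Subtype.ext (hF0 J hJB)
  refine ⟨q.copy hIeq hJeq, ?_⟩
  intro x hx
  rw [SimpleGraph.Walk.support_copy] at hx
  exact hq x hx
end

section
/- Let G be a finite simple graph with vertex set V, let k be a natural number, and let B be a nonempty subset of V that is an independent set of G and a module of G (every vertex of V \ B is adjacent either to all vertices of B or to none of them). Let N(B) denote the set of vertices of V \ B adjacent to some vertex of B. Suppose that no maximal independent set of the subgraph of G induced by V \ (B ∪ N(B)) has cardinality lying in the interval [k − |B|, k − 1]. Then every independent set I of G with |I| ≥ k and I ∩ B ≠ ∅ lies in the same connected component of TAR_k(G) as some independent set of size at least k that is disjoint from B. -/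
lemma indep_of_subset {V : Type*} {G : SimpleGraph V} {s t : Finset V}
    (h : G.IsIndepFinset t) (hst : s ⊆ t) : G.IsIndepFinset s :=
  fun _ ha _ hb hab => h (hst ha) (hst hb) hab

lemma tar_subset_reach {V : Type*} [DecidableEq V] (G : SimpleGraph V) (k : ℕ)
    (I J : {I : Finset V // G.IsIndepFinset I ∧ k ≤ I.card}) (h : I.1 ⊆ J.1) :
    (G.TAR k).Reachable I J := by
  generalize hn : (J.1 \ I.1).card = n
  induction n generalizing I with
  | zero =>
    have he : J.1 ⊆ I.1 := by
      rw [Finset.card_eq_zero, Finset.sdiff_eq_empty_iff_subset] at hn; exact hn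
    have : I = J := Subtype.ext (Finset.Subset.antisymm h he)
    exact this ▸ SimpleGraph.Reachable.refl I
  | succ n ih =>
    have hne : (J.1 \ I.1).Nonempty := by
      rw [← Finset.card_pos, hn]; omega
    obtain ⟨x, hx⟩ := hne
    rw [Finset.mem_sdiff] at hx
    have hI'sub : insert x I.1 ⊆ J.1 := Finset.insert_subset hx.1 h
    have hI'ind : G.IsIndepFinset (insert x I.1) := indep_of_subset J.2.1 hI'sub
    have hI'card : k ≤ (insert x I.1).card :=
      le_trans I.2.2 (Finset.card_le_card (Finset.subset_insert _ _))
    have hadj : (G.TAR k).Adj I ⟨insert x I.1, hI'ind, hI'card⟩ := by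
      show (symmDiff I.1 (insert x I.1)).card = 1
      have : symmDiff I.1 (insert x I.1) = {x} := by
        rw [symmDiff_def]
        simp [Finset.sdiff_eq_empty_iff_subset.mpr (Finset.subset_insert x I.1),
          Finset.insert_sdiff_of_notMem, hx.2, Finset.sdiff_eq_empty_iff_subset,
          Finset.insert_sdiff_cancel hx.2]
      rw [this, Finset.card_singleton]
    refine hadj.reachable.trans (ih ⟨insert x I.1, hI'ind, hI'card⟩ hI'sub ?_)
    have : J.1 \ insert x I.1 = (J.1 \ I.1).erase x := by
      rw [Finset.sdiff_insert]
    rw [this, Finset.card_erase_of_mem (by rw [Finset.mem_sdiff]; exact hx), hn]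
    omega

theorem tar_reach_indep_avoiding_module {V : Type*} [Fintype V] [DecidableEq V]
    (G : SimpleGraph V) [DecidableRel G.Adj] (k : ℕ)
    (B : Finset V) (hBne : B.Nonempty) (hBind : G.IsIndepFinset B)
    (hBmod : ∀ v : V, v ∉ B → (∀ w ∈ B, G.Adj v w) ∨ (∀ w ∈ B, ¬ G.Adj v w))
    (NB : Finset V) (hNB : NB = Finset.univ.filter fun v => v ∉ B ∧ ∃ b ∈ B, G.Adj v b)
    (R : Finset V) (hR : R = Finset.univ \ (B ∪ NB))
    (hno : ∀ S : Finset V, S ⊆ R → G.IsIndepFinset S →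
      (∀ T : Finset V, T ⊆ R → G.IsIndepFinset T → S ⊆ T → T = S) →
      ¬ (k - B.card ≤ S.card ∧ S.card ≤ k - 1))
    (I : Finset V) (hI : G.IsIndepFinset I ∧ k ≤ I.card) (hIB : I ∩ B ≠ ∅) :
    ∃ (K : Finset V) (hK : G.IsIndepFinset K ∧ k ≤ K.card),
      K ∩ B = ∅ ∧ (G.TAR k).Reachable ⟨I, hI⟩ ⟨K, hK⟩ := by
  classical
  -- Basic facts about R
  have hRmem : ∀ v, v ∈ R ↔ v ∉ B ∧ v ∉ NB := by
    intro v; rw [hR]; simp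
  have hRnoadj : ∀ r ∈ R, ∀ b ∈ B, ¬ G.Adj r b := by
    intro r hr b hb hadj
    obtain ⟨hrB, hrNB⟩ := (hRmem r).mp hr
    apply hrNB
    rw [hNB]
    simp only [Finset.mem_filter, Finset.mem_univ, true_and]
    exact ⟨hrB, b, hb, hadj⟩
  -- I contains some vertex of B
  obtain ⟨b0, hb0⟩ := Finset.nonempty_iff_ne_empty.mpr hIB
  rw [Finset.mem_inter] at hb0
  -- I ⊆ B ∪ R
  have hIsub : I ⊆ B ∪ R := by
    intro v hv
    rw [Finset.mem_union]
    by_cases hvB : v ∈ B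
    · exact Or.inl hvB
    · refine Or.inr ((hRmem v).mpr ⟨hvB, fun hvNB => ?_⟩)
      rw [hNB] at hvNB
      simp only [Finset.mem_filter, Finset.mem_univ, true_and] at hvNB
      obtain ⟨_, b', hb', hadj⟩ := hvNB
      rcases hBmod v hvB with hall | hnone
      · exact hI.1 hv hb0.1 (fun h => hvB (h ▸ hb0.2)) (hall b0 hb0.2)
      · exact hnone b' hb' hadj
  set S := I ∩ R with hS
  have hSsubR : S ⊆ R := Finset.inter_subset_right
  have hSind : G.IsIndepFinset S := indep_of_subset hI.1 Finset.inter_subset_left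
  -- a maximal independent subset of R containing S
  set 𝒯 : Finset (Finset V) := R.powerset.filter (fun T => G.IsIndepFinset T ∧ S ⊆ T) with h𝒯
  have hS𝒯 : S ∈ 𝒯 := by
    rw [h𝒯, Finset.mem_filter, Finset.mem_powerset]
    exact ⟨hSsubR, hSind, Finset.Subset.refl S⟩
  obtain ⟨T, hT𝒯, hTmax⟩ := Finset.exists_max_image 𝒯 Finset.card ⟨S, hS𝒯⟩
  rw [h𝒯, Finset.mem_filter, Finset.mem_powerset] at hT𝒯
  obtain ⟨hTR, hTind, hST⟩ := hT𝒯
  have hTmaximal : ∀ T' : Finset V, T' ⊆ R → G.IsIndepFinset T' → T ⊆ T' → T' = T := by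
    intro T' hT'R hT'ind hTT'
    have hT'𝒯 : T' ∈ 𝒯 := by
      rw [h𝒯, Finset.mem_filter, Finset.mem_powerset]
      exact ⟨hT'R, hT'ind, hST.trans hTT'⟩
    exact ((Finset.eq_of_subset_of_card_le hTT' (hTmax T' hT'𝒯))).symm
  have hnoT := hno T hTR hTind hTmaximal
  -- I ⊆ B ∪ T
  have hIBT : I ⊆ B ∪ T := by
    intro v hv
    rcases Finset.mem_union.mp (hIsub hv) with h | h
    · exact Finset.mem_union_left _ h
    · exact Finset.mem_union_right _ (hST (Finset.mem_inter.mpr ⟨hv, h⟩))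
  -- k ≤ T.card
  have hkT : k ≤ T.card := by
    by_contra hk
    have h1 : I.card ≤ (B ∪ T).card := Finset.card_le_card hIBT
    have h2 : (B ∪ T).card ≤ B.card + T.card := Finset.card_union_le _ _
    have h3 := hI.2
    omega
  -- B ∪ T is independent
  have hBTind : G.IsIndepFinset (B ∪ T) := by
    intro a ha b hb hab hadj
    rcases Finset.mem_union.mp ha with haB | haT <;>
      rcases Finset.mem_union.mp hb with hbB | hbT
    · exact hBind haB hbB hab hadj
    · exact hRnoadj b (hTR hbT) a haB hadj.symm
    · exact hRnoadj a (hTR haT) b hbB hadj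
    · exact hTind haT hbT hab hadj
  have hBTcard : k ≤ (B ∪ T).card := hkT.trans (Finset.card_le_card Finset.subset_union_right)
  have hTB : T ∩ B = ∅ := by
    rw [Finset.eq_empty_iff_forall_notMem]
    intro x hx
    rw [Finset.mem_inter] at hx
    exact ((hRmem x).mp (hTR hx.1)).1 hx.2
  refine ⟨T, ⟨hTind, hkT⟩, hTB, ?_⟩
  have r1 : (G.TAR k).Reachable ⟨I, hI⟩ ⟨B ∪ T, hBTind, hBTcard⟩ :=
    tar_subset_reach G k _ _ hIBT
  have r2 : (G.TAR k).Reachable ⟨T, hTind, hkT⟩ ⟨B ∪ T, hBTind, hBTcard⟩ :=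
    tar_subset_reach G k _ _ Finset.subset_union_right
  exact r1.trans r2.symm
end
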